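/- Let 𝓛 be a finite-dimensional nilpotent Lie algebra over a field k and M a one-dimensional 𝓛-module given by a nonzero character χ : 𝓛 → k (necessarily vanishing on [𝓛,𝓛]). Then the Lie algebra cohomology H^i(𝓛, M) vanishes for all i ≥ 0. -/

import Mathlib

set_option linter.unusedSectionVars false

section CE
variable (k L M : Type*) [CommRing k] [LieRing L] [LieAlgebra k L]
  [AddCommGroup M] [Module k M] [LieRingModule L M] [LieModule k L M]

/-- The Chevalley–Eilenberg differential on alternating cochains, as a raw function:
`(df)(x₀,…,xₙ) = ∑ᵢ (-1)ⁱ ⁅xᵢ, f(…x̂ᵢ…)⁆ + ∑_{p<q} (-1)^{p+q} f(⁅xₚ,x_q⁆, …x̂ₚ…x̂_q…)`,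
the second sum written via `Function.update` (placing `⁅xₚ,x_q⁆` in the slot of `x_q`,
with the matching sign `(-1)^{p+1}`). -/
noncomputable def ceDiffFun (n : ℕ) (f : AlternatingMap k L M (Fin n))
    (x : Fin (n + 1) → L) : M :=
  (∑ i : Fin (n + 1), ((-1 : ℤ) ^ (i : ℕ)) • ⁅x i, f fun j => x (i.succAbove j)⁆) +
    ∑ p : Fin (n + 1), ∑ q : Fin (n + 1),
      if h : p < q then
        ((-1 : ℤ) ^ ((p : ℕ) + 1)) •
          f (Function.update (fun j => x (p.succAbove j))
              (q.pred (Fin.pos_iff_ne_zero.mp (lt_of_le_of_lt (Fin.zero_le p) h)))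
              ⁅x p, x q⁆)
      else 0

theorem ceDiffFun_add (n : ℕ) (f g : AlternatingMap k L M (Fin n)) (x : Fin (n + 1) → L) :
    ceDiffFun k L M n (f + g) x = ceDiffFun k L M n f x + ceDiffFun k L M n g x := by
  have key : ∀ (P : Prop) [Decidable P] (a b : P → M),
      (if h : P then a h + b h else 0) =
        (if h : P then a h else 0) + (if h : P then b h else 0) := by
    intro P _ a b; split <;> simp
  simp only [ceDiffFun, AlternatingMap.add_apply, lie_add, smul_add, key,
    Finset.sum_add_distrib]
  abel

theorem ceDiffFun_smul (n : ℕ) (c : k) (f : AlternatingMap k L M (Fin n))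
    (x : Fin (n + 1) → L) :
    ceDiffFun k L M n (c • f) x = c • ceDiffFun k L M n f x := by
  have key : ∀ (P : Prop) [Decidable P] (a : P → M),
      (if h : P then c • a h else 0) = c • (if h : P then a h else 0) := by
    intro P _ a; split <;> simp
  simp only [ceDiffFun, AlternatingMap.smul_apply, lie_smul, smul_comm _ c, key,
    Finset.smul_sum, smul_add]

theorem ceDiffFun_zero (n : ℕ) (x : Fin (n + 1) → L) :
    ceDiffFun k L M n (0 : AlternatingMap k L M (Fin n)) x = 0 := by
  simp [ceDiffFun]

/-- Chevalley–Eilenberg `n`-cocycles. -/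
noncomputable def ceZ (n : ℕ) : Submodule k (AlternatingMap k L M (Fin n)) where
  carrier := {f | ∀ x, ceDiffFun k L M n f x = 0}
  add_mem' := by
    intro f g hf hg x
    rw [ceDiffFun_add, hf, hg, add_zero]
  zero_mem' := by
    intro x; exact ceDiffFun_zero k L M n x
  smul_mem' := by
    intro c f hf x
    rw [ceDiffFun_smul, hf, smul_zero]

/-- Chevalley–Eilenberg `n`-coboundaries. -/
noncomputable def ceB : (n : ℕ) → Submodule k (AlternatingMap k L M (Fin n))
  | 0 => ⊥
  | n + 1 =>
    { carrier := {f | ∃ g : AlternatingMap k L M (Fin n), ∀ x, f x = ceDiffFun k L M n g x}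
      add_mem' := by
        rintro f f' ⟨g, hg⟩ ⟨g', hg'⟩
        exact ⟨g + g', fun x => by
          rw [AlternatingMap.add_apply, hg, hg', ceDiffFun_add]⟩
      zero_mem' :=
        ⟨0, fun x => by rw [AlternatingMap.zero_apply, ceDiffFun_zero]⟩
      smul_mem' := by
        rintro c f ⟨g, hg⟩
        exact ⟨c • g, fun x => by
          rw [AlternatingMap.smul_apply, hg, ceDiffFun_smul]⟩ }

/-- Chevalley–Eilenberg Lie algebra cohomology `H^n(L, M)`:
cocycles modulo coboundaries. -/
abbrev ceH (n : ℕ) :=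
  ↥(ceZ k L M n) ⧸ Submodule.comap (ceZ k L M n).subtype (ceB k L M n)

end CE


section Aux

open Finset Function

variable {k L M : Type*} [CommRing k] [LieRing L] [LieAlgebra k L]
  [AddCommGroup M] [Module k M] [LieRingModule L M] [LieModule k L M]

/-- The multilinear underpinning of the "Lie derivative acting on arguments" operator. -/
noncomputable def ceTmul (x₀ : L) {ν : ℕ} (f : AlternatingMap k L M (Fin ν)) :
    MultilinearMap k (fun _ : Fin ν => L) M :=
  ∑ r : Fin ν, f.toMultilinearMap.compLinearMap
    (Function.update (fun _ => (LinearMap.id : L →ₗ[k] L)) r (LieAlgebra.ad k L x₀))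

theorem ceTmul_apply (x₀ : L) {ν : ℕ} (f : AlternatingMap k L M (Fin ν)) (w : Fin ν → L) :
    ceTmul x₀ f w = ∑ r : Fin ν, f (Function.update w r ⁅x₀, w r⁆) := by
  classical
  rw [ceTmul, MultilinearMap.sum_apply]
  refine Finset.sum_congr rfl fun r _ => ?_
  rw [MultilinearMap.compLinearMap_apply]
  show f _ = f _
  congr 1
  funext s
  rcases eq_or_ne s r with rfl | h
  · simp [LieAlgebra.ad_apply]
  · simp [Function.update_of_ne h]

/-- The "Lie derivative acting on arguments" operator, as an alternating map. -/
noncomputable def ceTalt (x₀ : L) {ν : ℕ} (f : AlternatingMap k L M (Fin ν)) :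
    AlternatingMap k L M (Fin ν) :=
  { ceTmul x₀ f with
    map_eq_zero_of_eq' := by
      intro w a b hab hne
      show ceTmul x₀ f w = 0
      classical
      rw [ceTmul_apply]
      have hbmem : b ∈ (Finset.univ : Finset (Fin ν)).erase a :=
        Finset.mem_erase.mpr ⟨Ne.symm hne, Finset.mem_univ b⟩
      rw [← Finset.add_sum_erase _ _ (Finset.mem_univ a), ← Finset.add_sum_erase _ _ hbmem]
      have hrest : ∑ r ∈ (((Finset.univ : Finset (Fin ν)).erase a).erase b),
          f (Function.update w r ⁅x₀, w r⁆) = 0 := by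
        refine Finset.sum_eq_zero fun r hr => ?_
        have hrb : r ≠ b := (Finset.mem_erase.mp hr).1
        have hra : r ≠ a := (Finset.mem_erase.mp (Finset.mem_erase.mp hr).2).1
        refine f.map_eq_zero_of_eq _ ?_ hne
        rw [Function.update_of_ne (Ne.symm hra), Function.update_of_ne (Ne.symm hrb)]
        exact hab
      rw [hrest, add_zero]
      have hw : Function.update w b ⁅x₀, w b⁆ =
          Function.update w a ⁅x₀, w a⁆ ∘ Equiv.swap a b := by
        funext s
        simp only [Function.comp_apply]
        rcases eq_or_ne s a with rfl | hsa
        · rw [Equiv.swap_apply_left, Function.update_of_ne hne,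
            Function.update_of_ne (Ne.symm hne)]
          exact hab
        rcases eq_or_ne s b with rfl | hsb
        · rw [Equiv.swap_apply_right, Function.update_self, Function.update_self, hab]
        · rw [Equiv.swap_apply_of_ne_of_ne hsa hsb, Function.update_of_ne hsb,
            Function.update_of_ne hsa]
      rw [hw, AlternatingMap.map_swap _ _ hne, add_neg_cancel] }

theorem ceTalt_apply (x₀ : L) {ν : ℕ} (f : AlternatingMap k L M (Fin ν)) (w : Fin ν → L) :
    ceTalt x₀ f w = ∑ r : Fin ν, f (Function.update w r ⁅x₀, w r⁆) :=
  ceTmul_apply x₀ f w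

/-- The operator `ceTalt` as a linear endomorphism. -/
noncomputable def ceT (x₀ : L) (ν : ℕ) :
    AlternatingMap k L M (Fin ν) →ₗ[k] AlternatingMap k L M (Fin ν) where
  toFun f := ceTalt x₀ f
  map_add' f g := by
    ext w
    simp only [ceTalt_apply, AlternatingMap.add_apply, Finset.sum_add_distrib]
  map_smul' c f := by
    ext w
    simp only [ceTalt_apply, AlternatingMap.smul_apply, RingHom.id_apply, Finset.smul_sum]

theorem ceT_apply (x₀ : L) (ν : ℕ) (f : AlternatingMap k L M (Fin ν)) (w : Fin ν → L) :
    ceT x₀ ν f w = ∑ r : Fin ν, f (Function.update w r ⁅x₀, w r⁆) :=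
  ceTmul_apply x₀ f w

theorem ceT_pow_apply (x₀ : L) (ν : ℕ) (m : ℕ) (f : AlternatingMap k L M (Fin ν))
    (w : Fin ν → L) :
    ((ceT (M := M) x₀ ν ^ m) f) w
      = ∑ v : Fin m → Fin ν,
          f (fun r => ((LieAlgebra.ad k L x₀) ^ (∑ s, if v s = r then 1 else 0)) (w r)) := by
  classical
  induction m generalizing f w with
  | zero =>
      rw [pow_zero, Module.End.one_apply]
      rw [Fintype.sum_subsingleton _ (Fin.elim0 : Fin 0 → Fin ν)]
      simp
  | succ m ih =>
      rw [pow_succ', Module.End.mul_apply, ceT_apply]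
      have step : ∀ r : Fin ν,
          ((ceT (M := M) x₀ ν ^ m) f) (Function.update w r ⁅x₀, w r⁆)
            = ∑ v : Fin m → Fin ν,
                f (fun t => ((LieAlgebra.ad k L x₀) ^
                    (∑ s : Fin (m+1), if (Fin.cons r v : Fin (m+1) → Fin ν) s = t then 1 else 0))
                  (w t)) := by
        intro r
        rw [ih]
        refine Finset.sum_congr rfl fun v _ => ?_
        congr 1
        funext t
        rcases eq_or_ne t r with rfl | h
        · rw [Fin.sum_univ_succ]
          simp only [Fin.cons_zero, Fin.cons_succ]
          rw [if_pos trivial, Function.update_self, add_comm 1, pow_succ, Module.End.mul_apply,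
            LieAlgebra.ad_apply]
        · rw [Fin.sum_univ_succ]
          simp only [Fin.cons_zero, Fin.cons_succ]
          rw [if_neg (fun hc => h hc.symm), Function.update_of_ne h, zero_add]
      rw [Finset.sum_congr rfl fun r _ => step r]
      set F : (Fin (m+1) → Fin ν) → M := fun v' =>
        f (fun t => ((LieAlgebra.ad k L x₀) ^ (∑ s, if v' s = t then 1 else 0)) (w t)) with hF
      show ∑ r : Fin ν, ∑ v : Fin m → Fin ν, F (Fin.cons r v) = ∑ v', F v'
      rw [← Equiv.sum_comp (Fin.consEquiv fun _ : Fin (m+1) => Fin ν) F, Fintype.sum_prod_type]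
      rfl

theorem ceT_pow_eq_zero (x₀ : L) (ν : ℕ) {N : ℕ}
    (hN : (LieAlgebra.ad k L x₀) ^ N = 0) (f : AlternatingMap k L M (Fin ν)) :
    ((ceT (M := M) x₀ ν) ^ (ν * N + 1)) f = 0 := by
  classical
  ext w
  rw [ceT_pow_apply, AlternatingMap.zero_apply]
  refine Finset.sum_eq_zero fun v _ => ?_
  obtain ⟨r, hr⟩ : ∃ r : Fin ν, N ≤ ∑ s, if v s = r then 1 else 0 := by
    by_contra hcon
    push_neg at hcon
    have h2 : ∑ r : Fin ν, ((∑ s, if v s = r then 1 else 0) + 1) ≤ ∑ _r : Fin ν, N :=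
      Finset.sum_le_sum fun r _ => Nat.succ_le_of_lt (hcon r)
    have h3 : ∑ r : Fin ν, ∑ s : Fin (ν * N + 1), (if v s = r then 1 else 0) = ν * N + 1 := by
      rw [Finset.sum_comm]
      simp [Finset.sum_ite_eq]
    rw [Finset.sum_add_distrib, h3, Finset.sum_const, Finset.card_univ, Fintype.card_fin,
      smul_eq_mul, mul_one, Finset.sum_const, Finset.card_univ, Fintype.card_fin,
      smul_eq_mul] at h2
    omega
  refine f.map_coord_zero r ?_
  show ((LieAlgebra.ad k L x₀) ^ (∑ s, if v s = r then 1 else 0)) (w r) = 0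
  rw [pow_eq_zero_of_le hr hN, LinearMap.zero_apply]

theorem ceCartan (n : ℕ) (x₀ : L) (f : AlternatingMap k L M (Fin (n+1))) (y : Fin (n+1) → L) :
    ceDiffFun k L M n (f.curryLeft x₀) y + ceDiffFun k L M (n+1) f (Fin.cons x₀ y)
      = ⁅x₀, f y⁆ - ∑ i : Fin (n+1), f (Function.update y i ⁅x₀, y i⁆) := by
  classical
  have hg : ∀ v : Fin n → L, f.curryLeft x₀ v = f (Fin.cons x₀ v) := fun _ => rfl
  have hcons0 : (fun j : Fin (n+1) => (Fin.cons x₀ y : Fin (n+2) → L) ((0 : Fin (n+2)).succAbove j)) = y := by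
    funext j
    exact Fin.cons_succ (α := fun _ : Fin (n+2) => L) x₀ y j
  have hconss : ∀ i : Fin (n+1),
      (fun j : Fin (n+1) => (Fin.cons x₀ y : Fin (n+2) → L) ((i.succ).succAbove j))
        = Fin.cons x₀ (fun j => y (i.succAbove j)) := by
    intro i
    funext j
    cases j using Fin.cases with
    | zero => rw [Fin.succ_succAbove_zero, Fin.cons_zero, Fin.cons_zero]
    | succ j' => rw [Fin.succ_succAbove_succ, Fin.cons_succ, Fin.cons_succ]
  have hupdc : ∀ (w : Fin n → L) (q : Fin (n+1)) (hq : q ≠ 0) (v : L),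
      Function.update (Fin.cons x₀ w : Fin (n+1) → L) q v = Fin.cons x₀ (Function.update w (q.pred hq) v) := by
    intro w q hq v
    funext j
    cases j using Fin.cases with
    | zero =>
        rw [Function.update_of_ne (Ne.symm hq), Fin.cons_zero, Fin.cons_zero]
    | succ j' =>
        rw [Fin.cons_succ]
        rcases eq_or_ne j' (q.pred hq) with rfl | hne
        · rw [Fin.succ_pred, Function.update_self, Function.update_self]
        · have h2 : j'.succ ≠ q := fun hc => hne (by subst hc; exact (Fin.pred_succ _).symm)
          rw [Function.update_of_ne h2, Fin.cons_succ, Function.update_of_ne hne]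
  have hS1 : (∑ i : Fin (n+2), ((-1 : ℤ) ^ (i : ℕ)) •
        ⁅(Fin.cons x₀ y : Fin (n+2) → L) i, f fun j => (Fin.cons x₀ y : Fin (n+2) → L) (i.succAbove j)⁆)
      = ⁅x₀, f y⁆ - ∑ i : Fin (n+1), ((-1 : ℤ) ^ (i : ℕ)) •
          ⁅y i, f.curryLeft x₀ fun j => y (i.succAbove j)⁆ := by
    have h0 : ((-1 : ℤ) ^ (((0 : Fin (n+2))) : ℕ)) •
        ⁅(Fin.cons x₀ y : Fin (n+2) → L) 0, f fun j => (Fin.cons x₀ y : Fin (n+2) → L) ((0 : Fin (n+2)).succAbove j)⁆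
          = ⁅x₀, f y⁆ := by
      rw [hcons0, Fin.cons_zero, Fin.val_zero, pow_zero, one_smul]
    have hsucc : ∀ i : Fin (n+1), ((-1 : ℤ) ^ ((i.succ : Fin (n+2)) : ℕ)) •
          ⁅(Fin.cons x₀ y : Fin (n+2) → L) i.succ, f fun j => (Fin.cons x₀ y : Fin (n+2) → L) ((i.succ).succAbove j)⁆
        = -(((-1 : ℤ) ^ (i : ℕ)) • ⁅y i, f.curryLeft x₀ fun j => y (i.succAbove j)⁆) := by
      intro i
      rw [hconss i, Fin.cons_succ, Fin.val_succ, pow_succ, mul_neg_one, neg_smul, hg]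
    rw [Fin.sum_univ_succ, h0, Finset.sum_congr rfl fun i _ => hsucc i,
      Finset.sum_neg_distrib, ← sub_eq_add_neg]
  have hS2 : (∑ p : Fin (n+2), ∑ q : Fin (n+2),
        if h : p < q then ((-1 : ℤ) ^ ((p : ℕ) + 1)) •
          f (Function.update (fun j => (Fin.cons x₀ y : Fin (n+2) → L) (p.succAbove j))
              (q.pred (Fin.pos_iff_ne_zero.mp (lt_of_le_of_lt (Fin.zero_le p) h)))
              ⁅(Fin.cons x₀ y : Fin (n+2) → L) p, (Fin.cons x₀ y : Fin (n+2) → L) q⁆)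
        else 0)
      = -(∑ i : Fin (n+1), f (Function.update y i ⁅x₀, y i⁆))
        - ∑ p : Fin (n+1), ∑ q : Fin (n+1),
            if h : p < q then ((-1 : ℤ) ^ ((p : ℕ) + 1)) •
              f.curryLeft x₀ (Function.update (fun j => y (p.succAbove j))
                (q.pred (Fin.pos_iff_ne_zero.mp (lt_of_le_of_lt (Fin.zero_le p) h)))
                ⁅y p, y q⁆)
            else 0 := by
    have hp0 : (∑ q : Fin (n+2),
        if h : (0 : Fin (n+2)) < q then ((-1 : ℤ) ^ (((0 : Fin (n+2)) : ℕ) + 1)) •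
          f (Function.update (fun j => (Fin.cons x₀ y : Fin (n+2) → L) ((0 : Fin (n+2)).succAbove j))
              (q.pred (Fin.pos_iff_ne_zero.mp (lt_of_le_of_lt (Fin.zero_le 0) h)))
              ⁅(Fin.cons x₀ y : Fin (n+2) → L) 0, (Fin.cons x₀ y : Fin (n+2) → L) q⁆)
        else 0)
        = -(∑ i : Fin (n+1), f (Function.update y i ⁅x₀, y i⁆)) := by
      have hq0 : (if h : (0 : Fin (n+2)) < 0 then ((-1 : ℤ) ^ (((0 : Fin (n+2)) : ℕ) + 1)) •
          f (Function.update (fun j => (Fin.cons x₀ y : Fin (n+2) → L) ((0 : Fin (n+2)).succAbove j))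
              ((0 : Fin (n+2)).pred (Fin.pos_iff_ne_zero.mp (lt_of_le_of_lt (Fin.zero_le 0) h)))
              ⁅(Fin.cons x₀ y : Fin (n+2) → L) 0, (Fin.cons x₀ y : Fin (n+2) → L) 0⁆)
          else 0) = 0 := dif_neg (lt_irrefl _)
      have hqs : ∀ q' : Fin (n+1), (if h : (0 : Fin (n+2)) < q'.succ then
            ((-1 : ℤ) ^ (((0 : Fin (n+2)) : ℕ) + 1)) •
            f (Function.update (fun j => (Fin.cons x₀ y : Fin (n+2) → L) ((0 : Fin (n+2)).succAbove j))
                ((q'.succ).pred (Fin.pos_iff_ne_zero.mp (lt_of_le_of_lt (Fin.zero_le 0) h)))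
                ⁅(Fin.cons x₀ y : Fin (n+2) → L) 0, (Fin.cons x₀ y : Fin (n+2) → L) q'.succ⁆)
          else 0) = -(f (Function.update y q' ⁅x₀, y q'⁆)) := by
        intro q'
        rw [dif_pos (Fin.succ_pos q')]
        rw [hcons0, Fin.pred_succ, Fin.cons_zero, Fin.cons_succ, Fin.val_zero, zero_add,
          pow_one, neg_smul, one_smul]
      rw [Fin.sum_univ_succ, hq0, zero_add, Finset.sum_congr rfl fun q' _ => hqs q',
        Finset.sum_neg_distrib]
    have hps : ∀ p' : Fin (n+1), (∑ q : Fin (n+2),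
        if h : p'.succ < q then ((-1 : ℤ) ^ (((p'.succ : Fin (n+2)) : ℕ) + 1)) •
          f (Function.update (fun j => (Fin.cons x₀ y : Fin (n+2) → L) ((p'.succ).succAbove j))
              (q.pred (Fin.pos_iff_ne_zero.mp (lt_of_le_of_lt (Fin.zero_le p'.succ) h)))
              ⁅(Fin.cons x₀ y : Fin (n+2) → L) p'.succ, (Fin.cons x₀ y : Fin (n+2) → L) q⁆)
        else 0)
        = -(∑ q : Fin (n+1),
            if h : p' < q then ((-1 : ℤ) ^ ((p' : ℕ) + 1)) •
              f.curryLeft x₀ (Function.update (fun j => y (p'.succAbove j))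
                (q.pred (Fin.pos_iff_ne_zero.mp (lt_of_le_of_lt (Fin.zero_le p') h)))
                ⁅y p', y q⁆)
            else 0) := by
      intro p'
      have hq0 : (if h : p'.succ < (0 : Fin (n+2)) then
            ((-1 : ℤ) ^ (((p'.succ : Fin (n+2)) : ℕ) + 1)) •
            f (Function.update (fun j => (Fin.cons x₀ y : Fin (n+2) → L) ((p'.succ).succAbove j))
                ((0 : Fin (n+2)).pred
                  (Fin.pos_iff_ne_zero.mp (lt_of_le_of_lt (Fin.zero_le p'.succ) h)))
                ⁅(Fin.cons x₀ y : Fin (n+2) → L) p'.succ, (Fin.cons x₀ y : Fin (n+2) → L) 0⁆)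
          else 0) = 0 := dif_neg (Fin.not_lt_zero _)
      have hqs : ∀ q' : Fin (n+1), (if h : p'.succ < q'.succ then
            ((-1 : ℤ) ^ (((p'.succ : Fin (n+2)) : ℕ) + 1)) •
            f (Function.update (fun j => (Fin.cons x₀ y : Fin (n+2) → L) ((p'.succ).succAbove j))
                ((q'.succ).pred
                  (Fin.pos_iff_ne_zero.mp (lt_of_le_of_lt (Fin.zero_le p'.succ) h)))
                ⁅(Fin.cons x₀ y : Fin (n+2) → L) p'.succ, (Fin.cons x₀ y : Fin (n+2) → L) q'.succ⁆)
          else 0)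
          = -(if h : p' < q' then ((-1 : ℤ) ^ ((p' : ℕ) + 1)) •
              f.curryLeft x₀ (Function.update (fun j => y (p'.succAbove j))
                (q'.pred (Fin.pos_iff_ne_zero.mp (lt_of_le_of_lt (Fin.zero_le p') h)))
                ⁅y p', y q'⁆)
            else 0) := by
        intro q'
        by_cases h : p' < q'
        · have hlt : p'.succ < q'.succ := Fin.succ_lt_succ_iff.mpr h
          have hq'0 : q' ≠ 0 :=
            Fin.pos_iff_ne_zero.mp (lt_of_le_of_lt (Fin.zero_le p') h)
          rw [dif_pos hlt, dif_pos h, hconss p', Fin.pred_succ, Fin.cons_succ, Fin.cons_succ,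
            hupdc _ q' hq'0, hg, Fin.val_succ, pow_succ (-1 : ℤ) ((p' : ℕ) + 1), mul_neg_one,
            neg_smul]
        · have hlt : ¬ p'.succ < q'.succ := fun hc => h (Fin.succ_lt_succ_iff.mp hc)
          rw [dif_neg hlt, dif_neg h, neg_zero]
      rw [Fin.sum_univ_succ, hq0, zero_add, Finset.sum_congr rfl fun q' _ => hqs q',
        Finset.sum_neg_distrib]
    rw [Fin.sum_univ_succ, hp0, Finset.sum_congr rfl fun p' _ => hps p',
      Finset.sum_neg_distrib, ← sub_eq_add_neg]
  simp only [ceDiffFun]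
  rw [hS1, hS2]
  abel

theorem ceDT (ν : ℕ) (x₀ : L) (hzero : ∀ (z : L) (m : M), ⁅(⁅x₀, z⁆ : L), m⁆ = 0)
    (f : AlternatingMap k L M (Fin ν)) (y : Fin (ν+1) → L) :
    ceDiffFun k L M ν ((ceT x₀ ν) f) y
      = ∑ i : Fin (ν+1), ceDiffFun k L M ν f (Function.update y i ⁅x₀, y i⁆) := by
  classical
  have hcomp : ∀ (j : Fin (ν+1)) (r : Fin ν) (v : L),
      (fun j' : Fin ν => Function.update y (j.succAbove r) v (j.succAbove j'))
        = Function.update (fun j' => y (j.succAbove j')) r v := by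
    intro j r v
    funext s
    rcases eq_or_ne s r with rfl | hne
    · rw [Function.update_self, Function.update_self]
    · rw [Function.update_of_ne (fun hc => hne (Fin.succAbove_right_injective hc)),
        Function.update_of_ne hne]
  have hds : ∀ {P : Prop} [inst : Decidable P] (a : Fin (ν+1) → P → M),
      (∑ i, if h : P then a i h else 0) = (if h : P then ∑ i, a i h else 0) := by
    intro P inst a
    split
    · rfl
    · simp
  have hlie : ∀ (x : L) (g : Fin ν → M),
      ⁅x, ∑ r, g r⁆ = ∑ r, ⁅x, g r⁆ := fun x g =>
    map_sum (AddMonoidHom.mk' (fun m => ⁅x, m⁆) (lie_add x)) g Finset.univ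
  simp only [ceDiffFun]
  rw [Finset.sum_add_distrib]
  congr 1
  · -- first sums
    rw [Finset.sum_comm]
    refine Finset.sum_congr rfl fun j _ => ?_
    rw [Fin.sum_univ_succAbove _ j, Function.update_self, hzero, smul_zero, zero_add]
    simp only [ceT_apply]
    rw [hlie, Finset.smul_sum]
    refine Finset.sum_congr rfl fun r _ => ?_
    rw [Function.update_of_ne (Fin.ne_succAbove j r), hcomp j r]
  · -- double sums
    conv_rhs => rw [Finset.sum_comm]
    refine Finset.sum_congr rfl fun p _ => ?_
    conv_rhs => rw [Finset.sum_comm]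
    refine Finset.sum_congr rfl fun q _ => ?_
    rw [hds]
    by_cases h : p < q
    · rw [dif_pos h, dif_pos h, ← Finset.smul_sum]
      congr 1
      have hq0 : q ≠ 0 := Fin.pos_iff_ne_zero.mp (lt_of_le_of_lt (Fin.zero_le p) h)
      have hpq : p ≠ q := ne_of_lt h
      have hσt : p.succAbove (q.pred hq0) = q := Fin.succAbove_pred_of_lt p q h
      have hpself : ∀ v : L, (fun j : Fin ν => Function.update y p v (p.succAbove j))
          = fun j => y (p.succAbove j) := by
        intro v; funext s; rw [Function.update_of_ne (Fin.succAbove_ne p s)]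
      have hcomp2 : ∀ v : L, (fun j' : Fin ν => Function.update y q v (p.succAbove j'))
          = Function.update (fun j' => y (p.succAbove j')) (q.pred hq0) v := by
        intro v
        have h2 := hcomp p (q.pred hq0) v
        rwa [hσt] at h2
      rw [ceT_apply]
      rw [Fin.sum_univ_succAbove _ p]
      rw [← Finset.add_sum_erase _ _ (Finset.mem_univ (q.pred hq0))]
      rw [← Finset.add_sum_erase _ _ (Finset.mem_univ (q.pred hq0))]
      rw [hσt]
      have hGt : f (Function.update
            (Function.update (fun j => y (p.succAbove j)) (q.pred hq0) ⁅y p, y q⁆)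
            (q.pred hq0)
            ⁅x₀, Function.update (fun j => y (p.succAbove j)) (q.pred hq0) ⁅y p, y q⁆
              (q.pred hq0)⁆)
          = f (Function.update (fun j => y (p.succAbove j)) (q.pred hq0) ⁅⁅x₀, y p⁆, y q⁆)
            + f (Function.update (fun j => y (p.succAbove j)) (q.pred hq0)
                ⁅y p, ⁅x₀, y q⁆⁆) := by
        rw [Function.update_self, Function.update_idem, leibniz_lie, f.map_update_add]
      have hFp : f (Function.update
            (fun j => Function.update y p ⁅x₀, y p⁆ (p.succAbove j)) (q.pred hq0)
            ⁅Function.update y p ⁅x₀, y p⁆ p, Function.update y p ⁅x₀, y p⁆ q⁆)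
          = f (Function.update (fun j => y (p.succAbove j)) (q.pred hq0) ⁅⁅x₀, y p⁆, y q⁆) := by
        rw [hpself, Function.update_self, Function.update_of_ne (Ne.symm hpq)]
      have hFq : f (Function.update
            (fun j => Function.update y q ⁅x₀, y q⁆ (p.succAbove j)) (q.pred hq0)
            ⁅Function.update y q ⁅x₀, y q⁆ p, Function.update y q ⁅x₀, y q⁆ q⁆)
          = f (Function.update (fun j => y (p.succAbove j)) (q.pred hq0)
              ⁅y p, ⁅x₀, y q⁆⁆) := by
        rw [hcomp2, Function.update_idem, Function.update_self, Function.update_of_ne hpq]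
      have hrest : ∀ r ∈ (Finset.univ : Finset (Fin ν)).erase (q.pred hq0),
          f (Function.update
              (Function.update (fun j => y (p.succAbove j)) (q.pred hq0) ⁅y p, y q⁆) r
              ⁅x₀, Function.update (fun j => y (p.succAbove j)) (q.pred hq0) ⁅y p, y q⁆ r⁆)
            = f (Function.update
                (fun j => Function.update y (p.succAbove r) ⁅x₀, y (p.succAbove r)⁆
                  (p.succAbove j)) (q.pred hq0)
                ⁅Function.update y (p.succAbove r) ⁅x₀, y (p.succAbove r)⁆ p,
                  Function.update y (p.succAbove r) ⁅x₀, y (p.succAbove r)⁆ q⁆) := by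
        intro r hr
        have hrt : r ≠ q.pred hq0 := (Finset.mem_erase.mp hr).1
        have hqr : q ≠ p.succAbove r := by
          intro hc
          exact hrt (Fin.succAbove_right_injective (hσt.trans hc)).symm
        rw [hcomp p r, Function.update_of_ne hrt, Function.update_comm hrt,
          Function.update_of_ne (Fin.ne_succAbove p r), Function.update_of_ne hqr]
      rw [hGt, hFp, hFq, Finset.sum_congr rfl hrest]
      abel
    · rw [dif_neg h, dif_neg h]

end Aux

/-- Let `𝓛` be a finite-dimensional nilpotent Lie algebra over a field `k` and
`M` a one-dimensional `𝓛`-module given by a nonzero character `χ : 𝓛 → k` (vanishing on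
commutators).  Then the Lie algebra cohomology `H^i(𝓛, M)` vanishes for all `i ≥ 0`. -/
theorem cohomology_vanishes_for_nontrivial_character
    (k 𝓛 M : Type*) [Field k] [LieRing 𝓛] [LieAlgebra k 𝓛] [FiniteDimensional k 𝓛]
    (hnil : LieRing.IsNilpotent 𝓛)
    [AddCommGroup M] [Module k M] [LieRingModule 𝓛 M] [LieModule k 𝓛 M]
    (χ : 𝓛 →ₗ[k] k) (hχcomm : ∀ x y : 𝓛, χ ⁅x, y⁆ = 0) (hχ : χ ≠ 0)
    (hdim : Module.finrank k M = 1)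
    (haction : ∀ (x : 𝓛) (m : M), ⁅x, m⁆ = χ x • m)
    (i : ℕ) :
    Subsingleton (ceH k 𝓛 M i) := by
  classical
  obtain ⟨x₀, hx₀⟩ : ∃ x, χ x ≠ 0 := by
    by_contra hcon
    push_neg at hcon
    exact hχ (LinearMap.ext fun x => hcon x)
  have hzero : ∀ (z : 𝓛) (m : M), ⁅(⁅x₀, z⁆ : 𝓛), m⁆ = 0 := fun z m => by
    rw [haction, hχcomm, zero_smul]
  haveI : LieRing.IsNilpotent 𝓛 := hnil
  obtain ⟨N, hN⟩ := LieAlgebra.nilpotent_ad_of_nilpotent_algebra k 𝓛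
  suffices hZB : ∀ f ∈ ceZ k 𝓛 M i, f ∈ ceB k 𝓛 M i by
    exact Submodule.Quotient.subsingleton_iff.mpr
      (Submodule.comap_subtype_eq_top.mpr hZB)
  cases i with
  | zero =>
      intro f hf
      have hf' : ∀ x, ceDiffFun k 𝓛 M 0 f x = 0 := hf
      have hfv : ∀ v : Fin 0 → 𝓛, f v = 0 := by
        intro v
        have h1 := hf' (fun _ => x₀)
        simp [ceDiffFun, Fin.sum_univ_succ, haction] at h1
        have h2 : f (fun j => x₀) = 0 := by
          rcases h1 with h | h
          · exact absurd h hx₀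
          · exact h
        have hv : v = (fun j => x₀) := Subsingleton.elim _ _
        rw [hv, h2]
      show f ∈ (⊥ : Submodule k (AlternatingMap k 𝓛 M (Fin 0)))
      rw [Submodule.mem_bot]
      exact AlternatingMap.ext fun v => hfv v
  | succ n =>
      intro f hf
      have hf' : ∀ x, ceDiffFun k 𝓛 M (n+1) f x = 0 := hf
      set c := χ x₀ with hc
      have hTZ : ∀ g : AlternatingMap k 𝓛 M (Fin (n+1)),
          (∀ x, ceDiffFun k 𝓛 M (n+1) g x = 0) →
          ∀ x, ceDiffFun k 𝓛 M (n+1) (ceT x₀ (n+1) g) x = 0 := by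
        intro g hg x
        rw [ceDT (n+1) x₀ hzero g x]
        exact Finset.sum_eq_zero fun j _ => hg _
      have hTB : ∀ g : AlternatingMap k 𝓛 M (Fin (n+1)),
          (∀ x, ceDiffFun k 𝓛 M (n+1) g x = 0) →
          (c • g - ceT x₀ (n+1) g) ∈ ceB k 𝓛 M (n+1) := by
        intro g hg
        show ∃ g' : AlternatingMap k 𝓛 M (Fin n), ∀ x,
          (c • g - ceT x₀ (n+1) g) x = ceDiffFun k 𝓛 M n g' x
        refine ⟨g.curryLeft x₀, fun x => ?_⟩
        have hca := ceCartan n x₀ g x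
        rw [hg (Fin.cons x₀ x), add_zero] at hca
        rw [AlternatingMap.sub_apply, AlternatingMap.smul_apply, hca, haction, ceT_apply]
      have main : ∀ m : ℕ, ∀ g : AlternatingMap k 𝓛 M (Fin (n+1)),
          (∀ x, ceDiffFun k 𝓛 M (n+1) g x = 0) →
          (∀ x, ceDiffFun k 𝓛 M (n+1) (((ceT (M := M) x₀ (n+1)) ^ m) g) x = 0)
            ∧ (c ^ m • g - ((ceT (M := M) x₀ (n+1)) ^ m) g) ∈ ceB k 𝓛 M (n+1) := by
        intro m
        induction m with
        | zero =>
            intro g hg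
            constructor
            · intro x
              rw [pow_zero, Module.End.one_apply]
              exact hg x
            · rw [pow_zero, one_smul, pow_zero, Module.End.one_apply, sub_self]
              exact Submodule.zero_mem _
        | succ m ih =>
            intro g hg
            obtain ⟨h1, h2⟩ := ih g hg
            have h3 : ((ceT (M := M) x₀ (n+1)) ^ (m+1)) g
                = ceT x₀ (n+1) (((ceT (M := M) x₀ (n+1)) ^ m) g) := by
              rw [pow_succ']; rfl
            constructor
            · intro x
              rw [h3]
              exact hTZ _ h1 x
            · have e : c ^ (m+1) • g - ((ceT (M := M) x₀ (n+1)) ^ (m+1)) g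
                  = c • (c ^ m • g - ((ceT (M := M) x₀ (n+1)) ^ m) g)
                    + (c • (((ceT (M := M) x₀ (n+1)) ^ m) g)
                        - ceT x₀ (n+1) (((ceT (M := M) x₀ (n+1)) ^ m) g)) := by
                rw [h3, smul_sub, smul_smul, ← pow_succ']
                abel
              rw [e]
              exact Submodule.add_mem _ (Submodule.smul_mem _ _ h2) (hTB _ h1)
      obtain ⟨h1, h2⟩ := main ((n+1) * N + 1) f hf'
      rw [ceT_pow_eq_zero x₀ (n+1) (hN x₀) f, sub_zero] at h2
      have hcm : c ^ ((n+1) * N + 1) ≠ 0 := pow_ne_zero _ hx₀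
      have hfe : f = (c ^ ((n+1) * N + 1))⁻¹ • (c ^ ((n+1) * N + 1) • f) := by
        rw [inv_smul_smul₀ hcm]
      rw [hfe]
      exact Submodule.smul_mem _ _ h2
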